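/- Let ρ, f : [0,T) × ℝ^d → ℝ (with f vector-valued) be C¹ solutions of the system ∂ₜρ = -ρ (∇·f) - f·∇ρ, ∂ₜf = -ρ f - c ∇ρ (c : [0,T)×ℝ^d → ℝ a given C¹ function), such that at time 0: ρ(0, 0) = 0, ∇ρ(0, 0) = 0, f(0, 0) = 0, and assume ρ, f are C² in space. Then for all t ∈ [0,T): ρ(t, 0) = 0, ∇ρ(t, 0) = 0, and f(t, 0) = 0. -/

import Mathlib

open Set

open Set Metric Real Filter Topology
open scoped NNReal

section helpers

variable {E : Type*} [NormedAddCommGroup E] [NormedSpace ℝ E]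

/-- Derivative within `Icc a b` at an interior-from-the-right point gives derivative within
`Ici t`. -/
lemma aux_Ici_of_Icc {f : ℝ → E} {l : E} {a b t : ℝ} (ht : t ∈ Ico a b)
    (h : HasDerivWithinAt f l (Icc a b) t) : HasDerivWithinAt f l (Ici t) t := by
  apply h.mono_of_mem_nhdsWithin
  have h1 : Iio b ∈ 𝓝[Ici t] t := nhdsWithin_le_nhds (Iio_mem_nhds ht.2)
  filter_upwards [h1, self_mem_nhdsWithin] with x hx hx'
  exact ⟨le_trans ht.1 hx', le_of_lt hx⟩

/-- Backward-in-time Grönwall estimate comparing two trajectories. -/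
lemma aux_dist_le_backward {v : ℝ → E → E} {s : ℝ → Set E} {K : ℝ≥0}
    (hv : ∀ t, LipschitzOnWith K (v t) (s t))
    {f g : ℝ → E} {a b δ : ℝ}
    (hf : ContinuousOn f (Icc a b))
    (hf' : ∀ t ∈ Ioc a b, HasDerivWithinAt f (v t (f t)) (Icc a b) t)
    (hfs : ∀ t ∈ Icc a b, f t ∈ s t)
    (hg : ContinuousOn g (Icc a b))
    (hg' : ∀ t ∈ Ioc a b, HasDerivWithinAt g (v t (g t)) (Icc a b) t)
    (hgs : ∀ t ∈ Icc a b, g t ∈ s t)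
    (hb : dist (f b) (g b) ≤ δ) :
    ∀ t ∈ Icc a b, dist (f t) (g t) ≤ δ * Real.exp (K * (b - t)) := by
  have hmt1 : MapsTo Neg.neg (Icc (-b) (-a)) (Icc a b) :=
    fun _ ht ↦ ⟨le_neg.mp ht.2, neg_le.mp ht.1⟩
  have hmt2 : MapsTo Neg.neg (Ico (-b) (-a)) (Ioc a b) :=
    fun _ ht ↦ ⟨lt_neg.mp ht.2, neg_le.mp ht.1⟩
  have key : ∀ u ∈ Icc (-b) (-a),
      dist (f (-u)) (g (-u)) ≤ δ * Real.exp (K * (u - (-b))) := by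
    apply dist_le_of_trajectories_ODE_of_mem (v := fun t y => -(v (-t) y)) (s := fun t => s (-t))
      (K := K)
    · intro t _
      have h1 := (hv (-t)).neg
      exact h1
    · exact hf.comp continuousOn_neg hmt1
    · intro t ht
      have h2 : HasDerivWithinAt (f ∘ Neg.neg) ((-1 : ℝ) • v (-t) (f (-t)))
          (Icc (-b) (-a)) t :=
        HasDerivWithinAt.scomp t (hf' (-t) (hmt2 ht)) (hasDerivAt_neg t).hasDerivWithinAt hmt1
      have h3 := aux_Ici_of_Icc ht h2
      simpa [Function.comp_def] using h3
    · exact fun t ht => hfs (-t) (hmt1 (Ico_subset_Icc_self ht))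
    · exact hg.comp continuousOn_neg hmt1
    · intro t ht
      have h2 : HasDerivWithinAt (g ∘ Neg.neg) ((-1 : ℝ) • v (-t) (g (-t)))
          (Icc (-b) (-a)) t :=
        HasDerivWithinAt.scomp t (hg' (-t) (hmt2 ht)) (hasDerivAt_neg t).hasDerivWithinAt hmt1
      have h3 := aux_Ici_of_Icc ht h2
      simpa [Function.comp_def] using h3
    · exact fun t ht => hgs (-t) (hmt1 (Ico_subset_Icc_self ht))
    · simpa using hb
  intro t ht
  have := key (-t) ⟨neg_le_neg ht.2, neg_le_neg ht.1⟩
  simpa [neg_neg, sub_neg_eq_add] using this.trans (le_of_eq (by ring_nf))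

end helpers

section helpers2

open InnerProductSpace ODE

/-- The hypotheses of the Picard–Lindelöf theorem (old Mathlib formulation). -/
structure OldIsPicardLindelof {E : Type*} [NormedAddCommGroup E] (v : ℝ → E → E)
    (tMin t₀ tMax : ℝ) (x₀ : E) (L : ℝ≥0) (R C : ℝ) : Prop where
  ht₀ : t₀ ∈ Icc tMin tMax
  hR : 0 ≤ R
  lipschitz : ∀ t ∈ Icc tMin tMax, LipschitzOnWith L (v t) (closedBall x₀ R)
  cont : ∀ x ∈ closedBall x₀ R, ContinuousOn (fun t : ℝ => v t x) (Icc tMin tMax)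
  norm_le : ∀ t ∈ Icc tMin tMax, ∀ x ∈ closedBall x₀ R, ‖v t x‖ ≤ C
  C_mul_le_R : (C : ℝ) * max (tMax - t₀) (t₀ - tMin) ≤ R

variable {E : Type*} [NormedAddCommGroup E] [NormedSpace ℝ E]

/-- Picard–Lindelöf existence, additionally recording that the solution stays in the closed
ball. -/
lemma aux_pl_exists [CompleteSpace E]
    {v : ℝ → E → E} {tMin t₀ tMax : ℝ} (x₀ : E) {C R : ℝ} {L : ℝ≥0}
    (hpl : OldIsPicardLindelof v tMin t₀ tMax x₀ L R C) :
    ∃ α : ℝ → E, α t₀ = x₀ ∧ ∀ t ∈ Icc tMin tMax, α t ∈ closedBall x₀ R ∧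
      HasDerivWithinAt α (v t (α t)) (Icc tMin tMax) t := by
  have hC : 0 ≤ C :=
    (norm_nonneg _).trans (hpl.norm_le t₀ hpl.ht₀ x₀ (mem_closedBall_self hpl.hR))
  lift C to ℝ≥0 using hC
  lift R to ℝ≥0 using hpl.hR
  have hf : IsPicardLindelof v (⟨t₀, hpl.ht₀⟩ : Icc tMin tMax) x₀ R 0 C L :=
    { lipschitzOnWith := hpl.lipschitz
      continuousOn := hpl.cont
      norm_le := hpl.norm_le
      mul_max_le := by rw [NNReal.coe_zero, sub_zero]; exact hpl.C_mul_le_R }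
  obtain ⟨α, hα⟩ := FunSpace.exists_isFixedPt_next hf (mem_closedBall_self le_rfl)
  refine ⟨α.compProj, ?_, fun t ht ↦ ⟨?_, ?_⟩⟩
  · show α.compProj ((⟨t₀, hpl.ht₀⟩ : Icc tMin tMax) : ℝ) = x₀
    rw [FunSpace.compProj_val, ← hα, FunSpace.next_apply₀]
  · exact α.compProj_mem_closedBall hf.mul_max_le
  · apply hasDerivWithinAt_picard_Icc (⟨t₀, hpl.ht₀⟩ : Icc tMin tMax).2 hf.continuousOn_uncurry
      α.continuous_compProj.continuousOn (fun _ ht' ↦ α.compProj_mem_closedBall hf.mul_max_le)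
      x₀ ht |>.congr_of_mem _ ht
    intro t' ht'
    nth_rw 1 [← hα]
    rw [FunSpace.compProj_of_mem ht', FunSpace.next_apply]

/-- A function bounded by a quadratic has vanishing value and derivative. -/
lemma aux_quad_zero {φ : E → ℝ} {p : E} {Cq r : ℝ} (hr : 0 < r)
    (hd : DifferentiableAt ℝ φ p)
    (hq : ∀ z, ‖z - p‖ ≤ r → |φ z| ≤ Cq * ‖z - p‖ ^ 2) :
    φ p = 0 ∧ HasFDerivAt φ (0 : E →L[ℝ] ℝ) p := by
  have hp0 : φ p = 0 := by
    have h := hq p (by simp [hr.le])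
    simp only [sub_self, norm_zero] at h
    norm_num at h
    exact h
  have hC1 : (0:ℝ) < max Cq 1 := lt_of_lt_of_le one_pos (le_max_right _ _)
  have key : HasFDerivAt φ (0 : E →L[ℝ] ℝ) p := by
    rw [hasFDerivAt_iff_isLittleO_nhds_zero]
    rw [Asymptotics.isLittleO_iff]
    intro ε hε
    have hball : ∀ᶠ h : E in 𝓝 0, ‖h‖ ≤ min r (ε / max Cq 1) := by
      have : 0 < min r (ε / max Cq 1) := lt_min hr (div_pos hε hC1)
      filter_upwards [Metric.closedBall_mem_nhds (0:E) this] with h hh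
      simpa using hh
    filter_upwards [hball] with h hh
    have h1 : ‖h‖ ≤ r := le_trans hh (min_le_left _ _)
    have h2 : ‖h‖ ≤ ε / max Cq 1 := le_trans hh (min_le_right _ _)
    have h3 := hq (p + h) (by simpa using h1)
    simp only [add_sub_cancel_left] at h3
    have h4 : |φ (p + h)| ≤ max Cq 1 * ‖h‖ ^ 2 := by
      refine h3.trans ?_
      have := sq_nonneg ‖h‖
      nlinarith [le_max_left Cq 1]
    simp only [hp0, ContinuousLinearMap.zero_apply, sub_zero, Real.norm_eq_abs]
    calc |φ (p + h)| ≤ max Cq 1 * ‖h‖ ^ 2 := h4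
      _ = (max Cq 1 * ‖h‖) * ‖h‖ := by ring
      _ ≤ ε * ‖h‖ := by
          apply mul_le_mul_of_nonneg_right _ (norm_nonneg _)
          calc max Cq 1 * ‖h‖ ≤ max Cq 1 * (ε / max Cq 1) :=
                mul_le_mul_of_nonneg_left h2 hC1.le
            _ = ε := by field_simp
  exact ⟨hp0, key⟩

/-- Quadratic Taylor-type bound for a `C²` function vanishing to first order at the origin. -/
lemma aux_taylor {d : ℕ} {φ : EuclideanSpace ℝ (Fin d) → ℝ} (h2 : ContDiff ℝ 2 φ)
    (h0 : φ 0 = 0) (hg : fderiv ℝ φ 0 = 0) :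
    ∃ K : ℝ, 0 ≤ K ∧ ∀ z : EuclideanSpace ℝ (Fin d), ‖z‖ ≤ 2 → |φ z| ≤ K * ‖z‖ ^ 2 := by
  have hgC1 : ContDiff ℝ 1 (fderiv ℝ φ) := h2.fderiv_right (by norm_num)
  have hcont : Continuous (fderiv ℝ (fderiv ℝ φ)) := hgC1.continuous_fderiv one_ne_zero
  obtain ⟨K₀, hK₀⟩ := (isCompact_closedBall (0 : EuclideanSpace ℝ (Fin d)) 2).exists_bound_of_continuousOn
    (f := fderiv ℝ (fderiv ℝ φ)) hcont.continuousOn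
  set K := max K₀ 0 with hK
  refine ⟨K, le_max_right _ _, fun z hz => ?_⟩
  have hgb : ∀ w : EuclideanSpace ℝ (Fin d), ‖w‖ ≤ 2 → ‖fderiv ℝ φ w‖ ≤ K * ‖w‖ := by
    intro w hw
    have := Convex.norm_image_sub_le_of_norm_fderiv_le (f := fderiv ℝ φ)
      (fun x _ => hgC1.differentiable one_ne_zero x) (C := K)
      (fun x hx => le_trans (hK₀ x hx) (le_max_left _ _))
      (convex_closedBall 0 2) (Metric.mem_closedBall_self (by norm_num))
      (by simpa [Metric.mem_closedBall, dist_eq_norm] using hw)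
    simpa [hg, sub_zero] using this
  have := Convex.norm_image_sub_le_of_norm_fderiv_le (f := φ) (x := (0 : EuclideanSpace ℝ (Fin d))) (y := z)
    (fun x _ => (h2.differentiable two_ne_zero) x) (C := K * ‖z‖)
    (fun x hx => by
      have hx' : ‖x‖ ≤ ‖z‖ := by simpa [Metric.mem_closedBall, dist_eq_norm] using hx
      exact (hgb x (hx'.trans hz)).trans
        (mul_le_mul_of_nonneg_left hx' (le_max_right _ _)))
    (convex_closedBall 0 ‖z‖) (Metric.mem_closedBall_self (norm_nonneg _))
    (by simp [Metric.mem_closedBall, dist_eq_norm])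
  have h5 : |φ z - φ 0| ≤ K * ‖z‖ * ‖z‖ := by simpa [Real.norm_eq_abs] using this
  rw [h0, sub_zero] at h5
  calc |φ z| ≤ K * ‖z‖ * ‖z‖ := h5
    _ = K * ‖z‖ ^ 2 := by ring

end helpers2


set_option maxHeartbeats 2000000

/-- Propagation of degeneracy for the inviscid Keller–Segel system in the variables
`(ρ, f = ∇c)`: if `∂ₜρ = -ρ(∇·f) - f·∇ρ` and `∂ₜf = -ρf - c∇ρ` on `[0,T) × ℝ^d`, with
`ρ(0,0) = 0`, `∇ρ(0,0) = 0`, `f(0,0) = 0`, then `ρ(t,0) = 0`, `∇ρ(t,0) = 0`, `f(t,0) = 0`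
for all `t ∈ [0,T)`. -/
theorem stmt_14 (d : ℕ) (hd : 1 ≤ d) (T : ℝ) (hT : 0 < T)
    (ρ c : ℝ → EuclideanSpace ℝ (Fin d) → ℝ)
    (f : ℝ → EuclideanSpace ℝ (Fin d) → EuclideanSpace ℝ (Fin d))
    (hρC1 : ContDiffOn ℝ 1 (fun p : ℝ × EuclideanSpace ℝ (Fin d) => ρ p.1 p.2)
      (Ico (0:ℝ) T ×ˢ univ))
    (hcC1 : ContDiffOn ℝ 1 (fun p : ℝ × EuclideanSpace ℝ (Fin d) => c p.1 p.2)
      (Ico (0:ℝ) T ×ˢ univ))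
    (hfC1 : ContDiffOn ℝ 1 (fun p : ℝ × EuclideanSpace ℝ (Fin d) => f p.1 p.2)
      (Ico (0:ℝ) T ×ˢ univ))
    (hρC2 : ∀ t ∈ Ico (0:ℝ) T, ContDiff ℝ 2 (ρ t))
    (hfC2 : ∀ t ∈ Ico (0:ℝ) T, ContDiff ℝ 2 (f t))
    (hρeq : ∀ x, ∀ t ∈ Ico (0:ℝ) T,
      HasDerivWithinAt (fun s => ρ s x)
        (-(ρ t x) * (∑ i, fderiv ℝ
            (fun y => (inner ℝ (f t y) (EuclideanSpace.single i 1) : ℝ)) x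
            (EuclideanSpace.single i 1))
          - (inner ℝ (f t x) (gradient (ρ t) x) : ℝ)) (Ico 0 T) t)
    (hfeq : ∀ x, ∀ t ∈ Ico (0:ℝ) T,
      HasDerivWithinAt (fun s => f s x)
        (-(ρ t x) • f t x - c t x • gradient (ρ t) x) (Ico 0 T) t)
    (h0ρ : ρ 0 0 = 0) (h0gradρ : gradient (ρ 0) 0 = 0) (h0f : f 0 0 = 0) :
    ∀ t ∈ Ico (0:ℝ) T, ρ t 0 = 0 ∧ gradient (ρ t) 0 = 0 ∧ f t 0 = 0 := by
  classical
  set S : Set (ℝ × EuclideanSpace ℝ (Fin d)) := Ico (0:ℝ) T ×ˢ univ with hSdef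
  have hSu : UniqueDiffOn ℝ S := (uniqueDiffOn_Ico 0 T).prod uniqueDiffOn_univ
  have hmem : ∀ (t : ℝ) (x : EuclideanSpace ℝ (Fin d)), t ∈ Ico (0:ℝ) T → (t, x) ∈ S :=
    fun t x ht => ⟨ht, mem_univ x⟩
  set Dρ : ℝ × EuclideanSpace ℝ (Fin d) → (ℝ × EuclideanSpace ℝ (Fin d) →L[ℝ] ℝ) :=
    fun p => fderivWithin ℝ (fun q : ℝ × EuclideanSpace ℝ (Fin d) => ρ q.1 q.2) S p with hDρdef
  set Df : ℝ × EuclideanSpace ℝ (Fin d) →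
      (ℝ × EuclideanSpace ℝ (Fin d) →L[ℝ] EuclideanSpace ℝ (Fin d)) :=
    fun p => fderivWithin ℝ (fun q : ℝ × EuclideanSpace ℝ (Fin d) => f q.1 q.2) S p with hDfdef
  have hρd : ∀ p ∈ S, HasFDerivWithinAt
      (fun q : ℝ × EuclideanSpace ℝ (Fin d) => ρ q.1 q.2) (Dρ p) S p :=
    fun p hp => ((hρC1.differentiableOn one_ne_zero) p hp).hasFDerivWithinAt
  have hfd : ∀ p ∈ S, HasFDerivWithinAt
      (fun q : ℝ × EuclideanSpace ℝ (Fin d) => f q.1 q.2) (Df p) S p :=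
    fun p hp => ((hfC1.differentiableOn one_ne_zero) p hp).hasFDerivWithinAt
  -- spatial derivatives
  have hspρ : ∀ (t : ℝ) (x : EuclideanSpace ℝ (Fin d)), t ∈ Ico (0:ℝ) T →
      HasFDerivAt (ρ t) ((Dρ (t,x)).comp
        (ContinuousLinearMap.inr ℝ ℝ (EuclideanSpace ℝ (Fin d)))) x := by
    intro t x ht
    have h1 := (hρd (t,x) (hmem t x ht)).comp x
      ((hasFDerivAt_prodMk_right t x).hasFDerivWithinAt (s := univ)) (fun y _ => hmem t y ht)
    rw [hasFDerivWithinAt_univ] at h1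
    exact h1
  have hspf : ∀ (t : ℝ) (x : EuclideanSpace ℝ (Fin d)), t ∈ Ico (0:ℝ) T →
      HasFDerivAt (f t) ((Df (t,x)).comp
        (ContinuousLinearMap.inr ℝ ℝ (EuclideanSpace ℝ (Fin d)))) x := by
    intro t x ht
    have h1 := (hfd (t,x) (hmem t x ht)).comp x
      ((hasFDerivAt_prodMk_right t x).hasFDerivWithinAt (s := univ)) (fun y _ => hmem t y ht)
    rw [hasFDerivWithinAt_univ] at h1
    exact h1
  have hgradρ' : ∀ (t : ℝ) (x : EuclideanSpace ℝ (Fin d)), t ∈ Ico (0:ℝ) T →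
      gradient (ρ t) x = (InnerProductSpace.toDual ℝ _).symm ((Dρ (t,x)).comp
        (ContinuousLinearMap.inr ℝ ℝ (EuclideanSpace ℝ (Fin d)))) :=
    fun t x ht => (hasFDerivAt_iff_hasGradientAt.mp (hspρ t x ht)).gradient
  have hinρ : ∀ (t : ℝ) (x : EuclideanSpace ℝ (Fin d)), t ∈ Ico (0:ℝ) T →
      ∀ w : EuclideanSpace ℝ (Fin d),
      (inner ℝ (gradient (ρ t) x) w : ℝ) = (Dρ (t,x)) (0, w) := by
    intro t x ht w
    rw [hgradρ' t x ht, InnerProductSpace.toDual_symm_apply]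
    rfl
  -- time derivatives
  have htρ : ∀ (t : ℝ) (x : EuclideanSpace ℝ (Fin d)), t ∈ Ico (0:ℝ) T →
      (Dρ (t,x)) (1, 0) =
        -(ρ t x) * (∑ i, fderiv ℝ
            (fun y => (inner ℝ (f t y) (EuclideanSpace.single i 1) : ℝ)) x
            (EuclideanSpace.single i 1))
          - (inner ℝ (f t x) (gradient (ρ t) x) : ℝ) := by
    intro t x ht
    have h1 : HasDerivWithinAt (fun s => ρ s x)
        ((Dρ (t,x)) (1, (0 : EuclideanSpace ℝ (Fin d)))) (Ico (0:ℝ) T) t := by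
      have h2 := (hρd (t,x) (hmem t x ht)).comp_hasDerivWithinAt t
        (((hasDerivAt_id t).prodMk (hasDerivAt_const t x)).hasDerivWithinAt)
        (fun s hs => hmem s x hs)
      exact h2
    exact UniqueDiffWithinAt.eq_deriv _ (uniqueDiffOn_Ico 0 T t ht) h1 (hρeq x t ht)
  have htf : ∀ (t : ℝ) (x : EuclideanSpace ℝ (Fin d)), t ∈ Ico (0:ℝ) T →
      (Df (t,x)) (1, 0) = -(ρ t x) • f t x - c t x • gradient (ρ t) x := by
    intro t x ht
    have h1 : HasDerivWithinAt (fun s => f s x)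
        ((Df (t,x)) (1, (0 : EuclideanSpace ℝ (Fin d)))) (Ico (0:ℝ) T) t := by
      have h2 := (hfd (t,x) (hmem t x ht)).comp_hasDerivWithinAt t
        (((hasDerivAt_id t).prodMk (hasDerivAt_const t x)).hasDerivWithinAt)
        (fun s hs => hmem s x hs)
      exact h2
    exact UniqueDiffWithinAt.eq_deriv _ (uniqueDiffOn_Ico 0 T t ht) h1 (hfeq x t ht)
  -- split (1, w) = (1, 0) + (0, w)
  have hsplitρ : ∀ (t : ℝ) (x : EuclideanSpace ℝ (Fin d)), t ∈ Ico (0:ℝ) T →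
      ∀ w : EuclideanSpace ℝ (Fin d),
      (Dρ (t,x)) (1, w) = (Dρ (t,x)) (1, 0) + (inner ℝ (gradient (ρ t) x) w : ℝ) := by
    intro t x ht w
    rw [hinρ t x ht w, ← map_add]
    congr 1
    simp
  have hsplitf : ∀ (t : ℝ) (x : EuclideanSpace ℝ (Fin d)), t ∈ Ico (0:ℝ) T →
      ∀ w : EuclideanSpace ℝ (Fin d),
      (Df (t,x)) (1, w) = (Df (t,x)) (1, 0)
        + ((Df (t,x)).comp (ContinuousLinearMap.inr ℝ ℝ (EuclideanSpace ℝ (Fin d)))) w := by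
    intro t x ht w
    rw [ContinuousLinearMap.comp_apply, ← map_add]
    congr 1
    simp
  -- curve chain rules
  have hcρ : ∀ (X : ℝ → EuclideanSpace ℝ (Fin d)) (x' : EuclideanSpace ℝ (Fin d)) (a b t : ℝ),
      Icc a b ⊆ Ico (0:ℝ) T → t ∈ Icc a b → HasDerivWithinAt X x' (Icc a b) t →
      HasDerivWithinAt (fun u => ρ u (X u)) ((Dρ (t, X t)) (1, x')) (Icc a b) t := by
    intro X x' a b t hsub htab hX
    exact (hρd (t, X t) (hmem _ _ (hsub htab))).comp_hasDerivWithinAt t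
      ((hasDerivWithinAt_id t (Icc a b)).prodMk hX) (fun u hu => hmem _ _ (hsub hu))
  have hcf : ∀ (X : ℝ → EuclideanSpace ℝ (Fin d)) (x' : EuclideanSpace ℝ (Fin d)) (a b t : ℝ),
      Icc a b ⊆ Ico (0:ℝ) T → t ∈ Icc a b → HasDerivWithinAt X x' (Icc a b) t →
      HasDerivWithinAt (fun u => f u (X u)) ((Df (t, X t)) (1, x')) (Icc a b) t := by
    intro X x' a b t hsub htab hX
    exact (hfd (t, X t) (hmem _ _ (hsub htab))).comp_hasDerivWithinAt t
      ((hasDerivWithinAt_id t (Icc a b)).prodMk hX) (fun u hu => hmem _ _ (hsub hu))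
  -- continuity
  have hρcont : ContinuousOn (fun p : ℝ × EuclideanSpace ℝ (Fin d) => ρ p.1 p.2) S :=
    hρC1.continuousOn
  have hfcont : ContinuousOn (fun p : ℝ × EuclideanSpace ℝ (Fin d) => f p.1 p.2) S :=
    hfC1.continuousOn
  have hDρcont : ContinuousOn Dρ S := hρC1.continuousOn_fderivWithin hSu le_rfl
  have hDfcont : ContinuousOn Df S := hfC1.continuousOn_fderivWithin hSu le_rfl
  -- divergence term rewritten through Df
  have hdiv : ∀ (t : ℝ) (x : EuclideanSpace ℝ (Fin d)), t ∈ Ico (0:ℝ) T → ∀ i : Fin d,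
      fderiv ℝ (fun y => (inner ℝ (f t y) (EuclideanSpace.single i 1) : ℝ)) x
          (EuclideanSpace.single i 1)
        = (inner ℝ (EuclideanSpace.single i 1 : EuclideanSpace ℝ (Fin d))
            (((Df (t,x)).comp (ContinuousLinearMap.inr ℝ ℝ (EuclideanSpace ℝ (Fin d))))
              (EuclideanSpace.single i 1)) : ℝ) := by
    intro t x ht i
    have h2 := ((innerSL ℝ (EuclideanSpace.single i 1 : EuclideanSpace ℝ (Fin d))).hasFDerivAt).comp
      x (hspf t x ht)
    have h3 : HasFDerivAt (fun y => (inner ℝ (f t y) (EuclideanSpace.single i 1) : ℝ))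
        ((innerSL ℝ (EuclideanSpace.single i 1 : EuclideanSpace ℝ (Fin d))).comp
          ((Df (t,x)).comp (ContinuousLinearMap.inr ℝ ℝ (EuclideanSpace ℝ (Fin d))))) x := by
      apply h2.congr_of_eventuallyEq
      filter_upwards with y
      exact real_inner_comm _ _
    rw [h3.fderiv]
    simp [ContinuousLinearMap.comp_apply]
  -- continuity of the three boundary quantities
  have contρ0 : ContinuousOn (fun t => ρ t 0) (Ico (0:ℝ) T) := by
    apply hρcont.comp ((continuous_id.prodMk continuous_const).continuousOn)
    exact fun t ht => hmem t 0 ht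
  have contf0 : ContinuousOn (fun t => f t 0) (Ico (0:ℝ) T) := by
    apply hfcont.comp ((continuous_id.prodMk continuous_const).continuousOn)
    exact fun t ht => hmem t 0 ht
  have contg0 : ContinuousOn (fun t => gradient (ρ t) 0) (Ico (0:ℝ) T) := by
    have h1 : ContinuousOn (fun t : ℝ => (InnerProductSpace.toDual ℝ
        (EuclideanSpace ℝ (Fin d))).symm ((Dρ (t, (0 : EuclideanSpace ℝ (Fin d)))).comp
        (ContinuousLinearMap.inr ℝ ℝ (EuclideanSpace ℝ (Fin d))))) (Ico (0:ℝ) T) := by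
      apply Continuous.comp_continuousOn (LinearIsometryEquiv.continuous _)
      apply ContinuousOn.clm_comp _ continuousOn_const
      exact hDρcont.comp ((continuous_id.prodMk continuous_const).continuousOn)
        (fun t ht => hmem t 0 ht)
    exact h1.congr (fun t ht => hgradρ' t 0 ht)
  -- the local extension step
  have EXT : ∀ t₀ ∈ Ico (0:ℝ) T, ρ t₀ 0 = 0 → gradient (ρ t₀) 0 = 0 → f t₀ 0 = 0 →
      ∃ δ > (0:ℝ), t₀ + δ < T ∧ ∀ t ∈ Icc t₀ (t₀ + δ),
        ρ t 0 = 0 ∧ gradient (ρ t) 0 = 0 ∧ f t 0 = 0 := by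
    intro t₀ ht₀ hρ0 hg0 hf0
    set t₂ : ℝ := (t₀ + T) / 2 with ht₂def
    have ht₀t₂ : t₀ < t₂ := by rw [ht₂def]; linarith [ht₀.2]
    have ht₂T : t₂ < T := by rw [ht₂def]; linarith [ht₀.2]
    set Q : Set (ℝ × EuclideanSpace ℝ (Fin d)) := Icc t₀ t₂ ×ˢ closedBall 0 2 with hQdef
    have hQS : Q ⊆ S := by
      rintro ⟨s, y⟩ ⟨hs, _⟩
      exact hmem s y ⟨le_trans ht₀.1 hs.1, lt_of_le_of_lt hs.2 ht₂T⟩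
    have hQI : ∀ p ∈ Q, p.1 ∈ Ico (0:ℝ) T := fun p hp => (hQS hp).1
    have hQc : IsCompact Q := isCompact_Icc.prod (isCompact_closedBall _ _)
    obtain ⟨C₁, hC₁⟩ := hQc.exists_bound_of_continuousOn (hfcont.mono hQS)
    set C₀ : ℝ := max C₁ 0 with hC₀def
    have hC₀0 : 0 ≤ C₀ := le_max_right _ _
    have hC₀ : ∀ p ∈ Q, ‖f p.1 p.2‖ ≤ C₀ := fun p hp => le_trans (hC₁ p hp) (le_max_left _ _)
    have hDfAcont : ContinuousOn (fun p => (Df p).comp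
        (ContinuousLinearMap.inr ℝ ℝ (EuclideanSpace ℝ (Fin d)))) S :=
      hDfcont.clm_comp continuousOn_const
    obtain ⟨L₁, hL₁⟩ := hQc.exists_bound_of_continuousOn (hDfAcont.mono hQS)
    set L : ℝ := max L₁ 0 with hLdef
    have hL0 : 0 ≤ L := le_max_right _ _
    have hL : ∀ p ∈ Q, ‖(Df p).comp (ContinuousLinearMap.inr ℝ ℝ
        (EuclideanSpace ℝ (Fin d)))‖ ≤ L := fun p hp => le_trans (hL₁ p hp) (le_max_left _ _)
    set Lnn : ℝ≥0 := ⟨L, hL0⟩ with hLnndef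
    -- Lipschitz bound for f t on the ball
    have hflip : ∀ t ∈ Icc t₀ t₂, LipschitzOnWith Lnn (f t) (closedBall 0 2) := by
      intro t ht
      have htI : t ∈ Ico (0:ℝ) T := ⟨le_trans ht₀.1 ht.1, lt_of_le_of_lt ht.2 ht₂T⟩
      refine Convex.lipschitzOnWith_of_nnnorm_fderiv_le (𝕜 := ℝ)
        (fun x _ => (hspf t x htI).differentiableAt)
        (fun x hx => ?_) (convex_closedBall _ _)
      rw [← NNReal.coe_le_coe, coe_nnnorm, (hspf t x htI).fderiv]
      exact hL (t, x) ⟨ht, hx⟩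
    -- divergence bound on the tube
    have hSb : ∀ p ∈ Q,
        |∑ i, fderiv ℝ (fun y => (inner ℝ (f p.1 y) (EuclideanSpace.single i 1) : ℝ)) p.2
          (EuclideanSpace.single i 1)| ≤ (d:ℝ) * L := by
      rintro ⟨t, x⟩ hp
      have htI : t ∈ Ico (0:ℝ) T := hQI _ hp
      have hterm : ∀ i : Fin d,
          |fderiv ℝ (fun y => (inner ℝ (f t y) (EuclideanSpace.single i 1) : ℝ)) x
            (EuclideanSpace.single i 1)| ≤ L := by
        intro i
        rw [hdiv t x htI i]
        have h1 := abs_real_inner_le_norm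
          (EuclideanSpace.single i 1 : EuclideanSpace ℝ (Fin d))
          (((Df (t,x)).comp (ContinuousLinearMap.inr ℝ ℝ (EuclideanSpace ℝ (Fin d))))
            (EuclideanSpace.single i 1))
        refine h1.trans ?_
        have h2 := ((Df (t,x)).comp (ContinuousLinearMap.inr ℝ ℝ
          (EuclideanSpace ℝ (Fin d)))).le_opNorm (EuclideanSpace.single i (1:ℝ))
        have h3 : ‖(EuclideanSpace.single i (1:ℝ) : EuclideanSpace ℝ (Fin d))‖ = 1 := by
          simp [EuclideanSpace.norm_single]
        rw [h3]
        rw [one_mul]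
        refine h2.trans ?_
        rw [h3, mul_one]
        exact hL (t,x) hp
      calc |∑ i, fderiv ℝ (fun y => (inner ℝ (f t y) (EuclideanSpace.single i 1) : ℝ)) x
            (EuclideanSpace.single i 1)|
          ≤ ∑ i, |fderiv ℝ (fun y => (inner ℝ (f t y) (EuclideanSpace.single i 1) : ℝ)) x
            (EuclideanSpace.single i 1)| := Finset.abs_sum_le_sum_abs _ _
        _ ≤ ∑ _i : Fin d, L := Finset.sum_le_sum (fun i _ => hterm i)
        _ = (d:ℝ) * L := by simp [Finset.sum_const, Finset.card_univ, nsmul_eq_mul]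
    -- Taylor bound at time t₀
    have hfd0 : fderiv ℝ (ρ t₀) 0 = 0 := by
      rw [(hspρ t₀ 0 ht₀).fderiv]
      have h2 : (InnerProductSpace.toDual ℝ (EuclideanSpace ℝ (Fin d))).symm
          ((Dρ (t₀, (0:EuclideanSpace ℝ (Fin d)))).comp
            (ContinuousLinearMap.inr ℝ ℝ (EuclideanSpace ℝ (Fin d)))) = 0 := by
        rw [← hgradρ' t₀ 0 ht₀]; exact hg0
      have h3 := congrArg (InnerProductSpace.toDual ℝ (EuclideanSpace ℝ (Fin d))) h2
      rwa [LinearIsometryEquiv.apply_symm_apply, map_zero] at h3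
    obtain ⟨K₂, hK₂0, hK₂⟩ := aux_taylor (hρC2 t₀ ht₀) hρ0 hfd0
    -- choice of δ
    set A : ℝ := C₀ + L + 1 with hAdef
    have hApos : (0:ℝ) < A := by rw [hAdef]; linarith
    set δ : ℝ := min (min ((t₂ - t₀)/2) 1) (1 / (4 * A)) with hδdef
    have hδpos : 0 < δ := lt_min (lt_min (by linarith) one_pos) (by positivity)
    have hδ1 : δ ≤ 1 := le_trans (min_le_left _ _) (min_le_right _ _)
    have hδhalf : δ ≤ (t₂ - t₀)/2 := le_trans (min_le_left _ _) (min_le_left _ _)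
    have hδA : δ ≤ 1 / (4*A) := min_le_right _ _
    have hδT : t₀ + δ < T := by linarith
    have hδt₂ : t₀ + δ ≤ t₂ := by linarith
    have hC₀δ : C₀ * δ ≤ 1/4 := by
      calc C₀ * δ ≤ A * (1/(4*A)) := by
            apply mul_le_mul (by rw [hAdef]; linarith) hδA (le_of_lt hδpos) (le_of_lt hApos)
        _ = 1/4 := by field_simp
    have hLδ : L * δ ≤ 1/4 := by
      calc L * δ ≤ A * (1/(4*A)) := by
            apply mul_le_mul (by rw [hAdef]; linarith) hδA (le_of_lt hδpos) (le_of_lt hApos)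
        _ = 1/4 := by field_simp
    have hIccsub : Icc t₀ (t₀ + δ) ⊆ Ico (0:ℝ) T :=
      fun s hs => ⟨le_trans ht₀.1 hs.1, by linarith [hs.2]⟩
    have hIccQ1 : ∀ t ∈ Icc t₀ (t₀ + δ), t ∈ Icc t₀ t₂ := fun t ht => ⟨ht.1, ht.2.trans hδt₂⟩
    -- forward characteristic from (t₀, 0)
    have hplX : OldIsPicardLindelof (fun t y => f t y) t₀ t₀ (t₀+δ) 0 Lnn 1 C₀ := by
      refine ⟨⟨le_rfl, by linarith⟩, by norm_num, ?_, ?_, ?_, ?_⟩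
      · intro t ht
        exact (hflip t (hIccQ1 t ht)).mono (closedBall_subset_closedBall one_le_two)
      · intro x _
        apply hfcont.comp ((continuous_id.prodMk continuous_const).continuousOn)
        intro t ht
        exact hmem t x (hIccsub ht)
      · intro t ht x hx
        exact hC₀ (t,x) ⟨hIccQ1 t ht, closedBall_subset_closedBall one_le_two hx⟩
      · rw [add_sub_cancel_left, sub_self, max_eq_left hδpos.le]
        linarith
    obtain ⟨X, hX0, hXprop⟩ := aux_pl_exists 0 hplX
    have hXball : ∀ t ∈ Icc t₀ (t₀+δ), X t ∈ closedBall (0 : EuclideanSpace ℝ (Fin d)) 1 :=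
      fun t ht => (hXprop t ht).1
    have hXd : ∀ t ∈ Icc t₀ (t₀+δ), HasDerivWithinAt X (f t (X t)) (Icc t₀ (t₀+δ)) t :=
      fun t ht => (hXprop t ht).2
    have hXcont : ContinuousOn X (Icc t₀ (t₀+δ)) :=
      fun t ht => ((hXd t ht).continuousWithinAt)
    have hXQ : ∀ t ∈ Icc t₀ (t₀+δ), (t, X t) ∈ Q := by
      intro t ht
      exact ⟨hIccQ1 t ht, closedBall_subset_closedBall one_le_two (hXball t ht)⟩
    have hXq : ∀ t ∈ Icc t₀ (t₀+δ), ‖X t‖ ≤ 1/4 := by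
      intro t ht
      have hgron := norm_le_gronwallBound_of_norm_deriv_right_le (f := X)
        (f' := fun s => f s (X s)) (δ := 0) (K := 0) (ε := C₀) (a := t₀) (b := t₀+δ)
        hXcont (fun s hs => aux_Ici_of_Icc hs (hXd s (Ico_subset_Icc_self hs)))
        (by simp [hX0]) ?_ t ht
      · rw [gronwallBound_K0] at hgron
        simp only [zero_add] at hgron
        refine hgron.trans ?_
        calc C₀ * (t - t₀) ≤ C₀ * δ := by
              apply mul_le_mul_of_nonneg_left _ hC₀0
              linarith [ht.2]
          _ ≤ 1/4 := hC₀δ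
      · intro s hs
        rw [zero_mul, zero_add]
        exact hC₀ (s, X s) (hXQ s (Ico_subset_Icc_self hs))
    set M : ℝ := (d:ℝ) * L with hMdef
    have hM0 : 0 ≤ M := mul_nonneg (Nat.cast_nonneg d) hL0
    have hPt : ∀ t₁ ∈ Icc t₀ (t₀+δ), ρ t₁ (X t₁) = 0 ∧ gradient (ρ t₁) (X t₁) = 0 := by
      intro t₁ ht₁
      have ht₁I : t₁ ∈ Ico (0:ℝ) T := hIccsub ht₁
      have hquad : ∀ z : EuclideanSpace ℝ (Fin d), ‖z - X t₁‖ ≤ 1/4 →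
          |ρ t₁ z| ≤ (9 * K₂ * Real.exp (d:ℝ)) * ‖z - X t₁‖^2 := by
        intro z hz
        have hIcc1 : Icc t₀ t₁ ⊆ Icc t₀ (t₀+δ) := Icc_subset_Icc_right ht₁.2
        have hsub1 : Icc t₀ t₁ ⊆ Ico (0:ℝ) T := fun s hs => hIccsub (hIcc1 hs)
        have hzball : closedBall z 1 ⊆ closedBall (0 : EuclideanSpace ℝ (Fin d)) 2 := by
          intro y hy
          rw [mem_closedBall] at hy ⊢
          have h1 : dist z (X t₁) ≤ 1/4 := by rw [dist_eq_norm]; exact hz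
          have h2 : dist (X t₁) (0 : EuclideanSpace ℝ (Fin d)) ≤ 1/4 := by
            rw [dist_eq_norm, sub_zero]; exact hXq t₁ ht₁
          calc dist y 0 ≤ dist y z + dist z (X t₁) + dist (X t₁) 0 := dist_triangle4 _ _ _ _
            _ ≤ 1 + 1/4 + 1/4 := by gcongr
            _ ≤ 2 := by norm_num
        have hplY : OldIsPicardLindelof (fun t y => f t y) t₀ t₁ t₁ z Lnn 1 C₀ := by
          refine ⟨⟨ht₁.1, le_rfl⟩, by norm_num, ?_, ?_, ?_, ?_⟩
          · intro t ht
            exact (hflip t (hIccQ1 t (hIcc1 ht))).mono hzball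
          · intro x _
            apply hfcont.comp ((continuous_id.prodMk continuous_const).continuousOn)
            intro t ht
            exact hmem t x (hsub1 ht)
          · intro t ht x hx
            exact hC₀ (t,x) ⟨hIccQ1 t (hIcc1 ht), hzball hx⟩
          · rw [sub_self, max_eq_right (by linarith [ht₁.1] : (0:ℝ) ≤ t₁ - t₀)]
            calc C₀ * (t₁ - t₀) ≤ C₀ * δ :=
                  mul_le_mul_of_nonneg_left (by linarith [ht₁.2]) hC₀0
              _ ≤ 1/4 := hC₀δ
              _ ≤ 1 := by norm_num
        obtain ⟨Y, hY1, hYprop⟩ := aux_pl_exists z hplY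
        have hYball : ∀ t ∈ Icc t₀ t₁, Y t ∈ closedBall (0:EuclideanSpace ℝ (Fin d)) 2 :=
          fun t ht => hzball (hYprop t ht).1
        have hYd : ∀ t ∈ Icc t₀ t₁, HasDerivWithinAt Y (f t (Y t)) (Icc t₀ t₁) t :=
          fun t ht => (hYprop t ht).2
        have hYcont : ContinuousOn Y (Icc t₀ t₁) := fun t ht => (hYd t ht).continuousWithinAt
        have hYQ : ∀ t ∈ Icc t₀ t₁, (t, Y t) ∈ Q :=
          fun t ht => ⟨hIccQ1 t (hIcc1 ht), hYball t ht⟩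
        set τ : ℝ → ℝ := fun t => min t₂ (max t₀ t) with hτdef
        have hτmem : ∀ t, τ t ∈ Icc t₀ t₂ :=
          fun t => ⟨le_min (le_of_lt ht₀t₂) (le_max_left _ _), min_le_left _ _⟩
        have hτeq : ∀ t ∈ Icc t₀ t₁, τ t = t := by
          intro t ht
          rw [hτdef]
          dsimp only
          rw [max_eq_right ht.1, min_eq_right (le_trans ht.2 (le_trans ht₁.2 hδt₂))]
        have hcomp : ∀ t ∈ Icc t₀ t₁, dist (Y t) (X t) ≤
            dist z (X t₁) * Real.exp ((Lnn:ℝ) * (t₁ - t)) := by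
          apply aux_dist_le_backward (v := fun t y => f (τ t) y)
            (s := fun _ => closedBall (0:EuclideanSpace ℝ (Fin d)) 2) (K := Lnn)
            (fun t => hflip (τ t) (hτmem t)) hYcont ?_ hYball (hXcont.mono hIcc1) ?_
            (fun t ht => closedBall_subset_closedBall one_le_two (hXball t (hIcc1 ht))) ?_
          · intro t ht
            simpa [hτeq t (Ioc_subset_Icc_self ht)] using hYd t (Ioc_subset_Icc_self ht)
          · intro t ht
            simpa [hτeq t (Ioc_subset_Icc_self ht)] using
              (hXd t (hIcc1 (Ioc_subset_Icc_self ht))).mono hIcc1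
          · rw [hY1]
        have hz4 : dist z (X t₁) ≤ 1/4 := by rw [dist_eq_norm]; exact hz
        have hYt₀ : ‖Y t₀‖ ≤ 3 * dist z (X t₁) := by
          have h1 := hcomp t₀ ⟨le_rfl, ht₁.1⟩
          rw [hX0, dist_zero_right] at h1
          refine h1.trans ?_
          have hexp : Real.exp ((Lnn:ℝ) * (t₁ - t₀)) ≤ 3 := by
            have h2 : (Lnn:ℝ) * (t₁ - t₀) ≤ 1 := by
              have h3 : (Lnn:ℝ) = L := rfl
              rw [h3]
              calc L * (t₁ - t₀) ≤ L * δ :=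
                    mul_le_mul_of_nonneg_left (by linarith [ht₁.2]) hL0
                _ ≤ 1/4 := hLδ
                _ ≤ 1 := by norm_num
            calc Real.exp ((Lnn:ℝ) * (t₁ - t₀)) ≤ Real.exp 1 := Real.exp_le_exp.mpr h2
              _ ≤ 3 := by linarith [Real.exp_one_lt_d9]
          calc dist z (X t₁) * Real.exp ((Lnn:ℝ)*(t₁ - t₀)) ≤ dist z (X t₁) * 3 :=
                mul_le_mul_of_nonneg_left hexp dist_nonneg
            _ = 3 * dist z (X t₁) := by ring
        have hYt₀2 : ‖Y t₀‖ ≤ 2 := by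
          refine hYt₀.trans ?_
          linarith [hz4]
        -- Grönwall for ρ along the backward characteristic
        have hβd : ∀ u ∈ Icc t₀ t₁, HasDerivWithinAt (fun u => ρ u (Y u))
            (-(ρ u (Y u)) * (∑ i, fderiv ℝ
              (fun y => (inner ℝ (f u y) (EuclideanSpace.single i 1) : ℝ)) (Y u)
              (EuclideanSpace.single i 1))) (Icc t₀ t₁) u := by
          intro u hu
          have huI : u ∈ Ico (0:ℝ) T := hsub1 hu
          have h1 := hcρ Y (f u (Y u)) t₀ t₁ u hsub1 hu (hYd u hu)
          have hval : (Dρ (u, Y u)) (1, f u (Y u)) = -(ρ u (Y u)) * (∑ i, fderiv ℝ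
              (fun y => (inner ℝ (f u y) (EuclideanSpace.single i 1) : ℝ)) (Y u)
              (EuclideanSpace.single i 1)) := by
            rw [hsplitρ u (Y u) huI (f u (Y u)), htρ u (Y u) huI,
              real_inner_comm (gradient (ρ u) (Y u)) (f u (Y u))]
            ring
          rw [hval] at h1
          exact h1
        have hβcont : ContinuousOn (fun u => ρ u (Y u)) (Icc t₀ t₁) :=
          fun u hu => (hβd u hu).continuousWithinAt
        have hgβ := norm_le_gronwallBound_of_norm_deriv_right_le
          (f := fun u => ρ u (Y u))
          (f' := fun u => -(ρ u (Y u)) * (∑ i, fderiv ℝ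
              (fun y => (inner ℝ (f u y) (EuclideanSpace.single i 1) : ℝ)) (Y u)
              (EuclideanSpace.single i 1)))
          (δ := ‖ρ t₀ (Y t₀)‖) (K := M) (ε := 0) (a := t₀) (b := t₁)
          hβcont (fun u hu => aux_Ici_of_Icc hu (hβd u (Ico_subset_Icc_self hu)))
          le_rfl ?_ t₁ ⟨ht₁.1, le_rfl⟩
        · rw [gronwallBound_ε0] at hgβ
          have hβ1 : |ρ t₁ z| = ‖ρ t₁ (Y t₁)‖ := by rw [hY1, Real.norm_eq_abs]
          rw [hβ1]
          have hTay : ‖ρ t₀ (Y t₀)‖ ≤ K₂ * ‖Y t₀‖^2 := by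
            rw [Real.norm_eq_abs]
            exact hK₂ (Y t₀) hYt₀2
          have hexp2 : Real.exp (M * (t₁ - t₀)) ≤ Real.exp (d:ℝ) := by
            apply Real.exp_le_exp.mpr
            rw [hMdef]
            calc (d:ℝ) * L * (t₁ - t₀) ≤ (d:ℝ) * (L * δ) := by
                  rw [mul_assoc]
                  apply mul_le_mul_of_nonneg_left _ (Nat.cast_nonneg d)
                  exact mul_le_mul_of_nonneg_left (by linarith [ht₁.2]) hL0
              _ ≤ (d:ℝ) * 1 := mul_le_mul_of_nonneg_left (by linarith [hLδ]) (Nat.cast_nonneg d)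
              _ = (d:ℝ) := mul_one _
          have hY₀z : ‖Y t₀‖^2 ≤ 9 * ‖z - X t₁‖^2 := by
            have := hYt₀
            rw [dist_eq_norm] at this
            nlinarith [norm_nonneg (Y t₀), norm_nonneg (z - X t₁)]
          calc ‖ρ t₁ (Y t₁)‖ ≤ ‖ρ t₀ (Y t₀)‖ * Real.exp (M * (t₁ - t₀)) := hgβ
            _ ≤ (K₂ * ‖Y t₀‖^2) * Real.exp (d:ℝ) := by
                apply mul_le_mul hTay hexp2 (Real.exp_nonneg _)
                positivity
            _ ≤ (K₂ * (9 * ‖z - X t₁‖^2)) * Real.exp (d:ℝ) := by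
                apply mul_le_mul_of_nonneg_right _ (Real.exp_nonneg _)
                exact mul_le_mul_of_nonneg_left hY₀z hK₂0
            _ = (9 * K₂ * Real.exp (d:ℝ)) * ‖z - X t₁‖^2 := by ring
        · intro u hu
          have h1 : ‖-(ρ u (Y u)) * (∑ i, fderiv ℝ
              (fun y => (inner ℝ (f u y) (EuclideanSpace.single i 1) : ℝ)) (Y u)
              (EuclideanSpace.single i 1))‖
              = |∑ i, fderiv ℝ (fun y => (inner ℝ (f u y) (EuclideanSpace.single i 1) : ℝ)) (Y u)
                (EuclideanSpace.single i 1)| * ‖ρ u (Y u)‖ := by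
            rw [Real.norm_eq_abs, abs_mul, abs_neg, Real.norm_eq_abs, mul_comm]
          rw [h1, add_zero]
          apply mul_le_mul_of_nonneg_right _ (norm_nonneg _)
          exact hSb (u, Y u) (hYQ u (Ico_subset_Icc_self hu))
      obtain ⟨hval0, hfder0⟩ := aux_quad_zero (by norm_num : (0:ℝ) < 1/4)
        (hspρ t₁ (X t₁) ht₁I).differentiableAt hquad
      refine ⟨hval0, ?_⟩
      have hgr := (hasFDerivAt_iff_hasGradientAt.mp hfder0).gradient
      rw [hgr, map_zero]
    have hVd : ∀ t ∈ Icc t₀ (t₀+δ), HasDerivWithinAt (fun u => f u (X u))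
        (((Df (t, X t)).comp (ContinuousLinearMap.inr ℝ ℝ (EuclideanSpace ℝ (Fin d))))
          (f t (X t))) (Icc t₀ (t₀+δ)) t := by
      intro t ht
      have htI : t ∈ Ico (0:ℝ) T := hIccsub ht
      have h1 := hcf X (f t (X t)) t₀ (t₀+δ) t hIccsub ht (hXd t ht)
      have hval : (Df (t, X t)) (1, f t (X t)) =
          ((Df (t, X t)).comp (ContinuousLinearMap.inr ℝ ℝ (EuclideanSpace ℝ (Fin d))))
            (f t (X t)) := by
        rw [hsplitf t (X t) htI (f t (X t)), htf t (X t) htI, (hPt t ht).1, (hPt t ht).2]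
        simp
      rw [hval] at h1
      exact h1
    have hVcont : ContinuousOn (fun u => f u (X u)) (Icc t₀ (t₀+δ)) :=
      fun t ht => (hVd t ht).continuousWithinAt
    set τ' : ℝ → ℝ := fun t => min (t₀+δ) (max t₀ t) with hτ'def
    have hτ'mem : ∀ t, τ' t ∈ Icc t₀ (t₀+δ) :=
      fun t => ⟨le_min (by linarith) (le_max_left _ _), min_le_left _ _⟩
    have hτ'eq : ∀ t ∈ Icc t₀ (t₀+δ), τ' t = t := by
      intro t ht
      rw [hτ'def]
      dsimp only
      rw [max_eq_right ht.1, min_eq_right ht.2]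
    have hV0 : ∀ t ∈ Icc t₀ (t₀+δ), f t (X t) = 0 := by
      have hlipw : ∀ s : ℝ, LipschitzOnWith Lnn
          (fun y => ((Df (τ' s, X (τ' s))).comp
            (ContinuousLinearMap.inr ℝ ℝ (EuclideanSpace ℝ (Fin d)))) y)
          (univ : Set (EuclideanSpace ℝ (Fin d))) := by
        intro s
        apply LipschitzWith.lipschitzOnWith
        apply (((Df (τ' s, X (τ' s))).comp
          (ContinuousLinearMap.inr ℝ ℝ (EuclideanSpace ℝ (Fin d)))).lipschitz).weaken
        rw [← NNReal.coe_le_coe, coe_nnnorm]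
        exact hL _ (hXQ (τ' s) (hτ'mem s))
      have hf' : ∀ s ∈ Ico t₀ (t₀+δ), HasDerivWithinAt (fun u => f u (X u))
          (((Df (τ' s, X (τ' s))).comp
            (ContinuousLinearMap.inr ℝ ℝ (EuclideanSpace ℝ (Fin d)))) (f s (X s)))
          (Ici s) s := by
        intro s hs
        have h1 := aux_Ici_of_Icc hs (hVd s (Ico_subset_Icc_self hs))
        rw [hτ'eq s (Ico_subset_Icc_self hs)]
        exact h1
      have hg' : ∀ s ∈ Ico t₀ (t₀+δ), HasDerivWithinAt
          (fun _ : ℝ => (0 : EuclideanSpace ℝ (Fin d)))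
          (((Df (τ' s, X (τ' s))).comp
            (ContinuousLinearMap.inr ℝ ℝ (EuclideanSpace ℝ (Fin d))))
            ((fun _ : ℝ => (0 : EuclideanSpace ℝ (Fin d))) s)) (Ici s) s := by
        intro s hs
        simp only [map_zero]
        exact hasDerivWithinAt_const _ _ _
      have hini : (fun u => f u (X u)) t₀ = (fun _ : ℝ => (0 : EuclideanSpace ℝ (Fin d))) t₀ := by
        show f t₀ (X t₀) = 0
        rw [hX0]
        exact hf0
      have key := ODE_solution_unique_of_mem_Icc_right
        (v := fun s y => ((Df (τ' s, X (τ' s))).comp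
          (ContinuousLinearMap.inr ℝ ℝ (EuclideanSpace ℝ (Fin d)))) y)
        (s := fun _ => (univ : Set (EuclideanSpace ℝ (Fin d)))) (K := Lnn)
        (fun s _ => hlipw s) hVcont hf' (fun _ _ => mem_univ _) continuousOn_const hg'
        (fun _ _ => mem_univ _) hini
      intro t ht
      exact key ht
    have hXconst : ∀ t ∈ Icc t₀ (t₀+δ), X t = 0 := by
      have hc := constant_of_has_deriv_right_zero (f := X) hXcont ?_
      · intro t ht
        rw [hc t ht, hX0]
      · intro s hs
        have h := aux_Ici_of_Icc hs (hXd s (Ico_subset_Icc_self hs))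
        rwa [hV0 s (Ico_subset_Icc_self hs)] at h
    refine ⟨δ, hδpos, hδT, ?_⟩
    intro t ht
    have h1 := hPt t ht
    have h2 := hV0 t ht
    rw [hXconst t ht] at h1 h2
    exact ⟨h1.1, h1.2, h2⟩
  -- continuous induction via sSup
  intro t ht
  set A : Set ℝ := {s | s ∈ Icc 0 t ∧ ∀ u ∈ Icc (0:ℝ) s,
    ρ u 0 = 0 ∧ gradient (ρ u) 0 = 0 ∧ f u 0 = 0} with hAdef
  have h0A : (0:ℝ) ∈ A := by
    refine ⟨⟨le_rfl, ht.1⟩, ?_⟩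
    intro u hu
    have hu0 : u = 0 := le_antisymm hu.2 hu.1
    rw [hu0]
    exact ⟨h0ρ, h0gradρ, h0f⟩
  have hAne : A.Nonempty := ⟨0, h0A⟩
  have hAbdd : BddAbove A := ⟨t, fun s hs => hs.1.2⟩
  set m := sSup A with hmdef
  have hm0 : 0 ≤ m := le_csSup hAbdd h0A
  have hmt : m ≤ t := csSup_le hAne (fun s hs => hs.1.2)
  have hmI : m ∈ Ico (0:ℝ) T := ⟨hm0, lt_of_le_of_lt hmt ht.2⟩
  have hbefore : ∀ u, 0 ≤ u → u < m →
      ρ u 0 = 0 ∧ gradient (ρ u) 0 = 0 ∧ f u 0 = 0 := by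
    intro u hu0 hum
    obtain ⟨a, haA, hua⟩ := exists_lt_of_lt_csSup hAne hum
    exact haA.2 u ⟨hu0, le_of_lt hua⟩
  have hatm : ρ m 0 = 0 ∧ gradient (ρ m) 0 = 0 ∧ f m 0 = 0 := by
    rcases eq_or_lt_of_le hm0 with h0 | h0
    · rw [← h0]
      exact ⟨h0ρ, h0gradρ, h0f⟩
    · set g : ℝ → ℝ × (EuclideanSpace ℝ (Fin d) × EuclideanSpace ℝ (Fin d)) :=
        fun u => (ρ u 0, (gradient (ρ u) 0, f u 0)) with hgdef
      have hgc : ContinuousOn g (Ico (0:ℝ) T) := contρ0.prodMk (contg0.prodMk contf0)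
      have hsub : Ico (0:ℝ) m ⊆ Ico (0:ℝ) T :=
        fun u hu => ⟨hu.1, lt_of_lt_of_le hu.2 (le_of_lt (lt_of_le_of_lt hmt ht.2))⟩
      have hne : (𝓝[Ico (0:ℝ) m] m).NeBot := by
        rw [← mem_closure_iff_nhdsWithin_neBot, closure_Ico (ne_of_lt h0)]
        exact ⟨hm0, le_rfl⟩
      have ht1 : Tendsto g (𝓝[Ico (0:ℝ) m] m) (𝓝 (g m)) := by
        have h2 : ContinuousWithinAt g (Ico (0:ℝ) m) m := (hgc m hmI).mono hsub
        exact h2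
      have ht2 : Tendsto g (𝓝[Ico (0:ℝ) m] m) (𝓝 (0, (0, 0))) := by
        have heqf : (fun _ : ℝ => ((0:ℝ), ((0:EuclideanSpace ℝ (Fin d)),
            (0:EuclideanSpace ℝ (Fin d))))) =ᶠ[𝓝[Ico (0:ℝ) m] m] g := by
          filter_upwards [self_mem_nhdsWithin] with u hu
          rcases hbefore u hu.1 hu.2 with ⟨a, b, cc⟩
          rw [hgdef]
          simp only
          rw [a, b, cc]
        exact Tendsto.congr' heqf tendsto_const_nhds
      have hgm := tendsto_nhds_unique ht1 ht2
      have h1 : ρ m 0 = 0 := congrArg Prod.fst hgm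
      have h2 : gradient (ρ m) 0 = 0 := congrArg (fun p => p.2.1) hgm
      have h3 : f m 0 = 0 := congrArg (fun p => p.2.2) hgm
      exact ⟨h1, h2, h3⟩
  rcases eq_or_lt_of_le hmt with heq | hlt
  · rw [← heq]
    exact hatm
  · exfalso
    obtain ⟨δ, hδpos, hδT, hconc⟩ := EXT m hmI hatm.1 hatm.2.1 hatm.2.2
    have hmin : min (m + δ) t ∈ A := by
      constructor
      · exact ⟨le_trans hm0 (le_min (by linarith) (le_of_lt hlt)), min_le_right _ _⟩
      · intro u hu
        rcases le_or_gt u m with h | h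
        · rcases eq_or_lt_of_le h with he | hl
          · rw [he]
            exact hatm
          · exact hbefore u hu.1 hl
        · exact hconc u ⟨le_of_lt h, le_trans hu.2 (min_le_left _ _)⟩
    have hle : min (m+δ) t ≤ m := le_csSup hAbdd hmin
    have hgt : m < min (m+δ) t := lt_min (by linarith) hlt
    linarith
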